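/- For d ≥ 5, the almost real rank of the monomial x^{d-2}y² ∈ ℝ[x,y]_d equals d - 1 (the maximal possible value). -/

import Mathlib

open MvPolynomial

/-- The differential operator `∂(f)` applied to `F`: substitute `∂/∂x, ∂/∂y` for the
variables of `f` and act on `F`.  `f ∈ (F)^⊥` iff `diffOp f F = 0`. -/
noncomputable def diffOp {k : Type*} [CommSemiring k]
    (f F : MvPolynomial (Fin 2) k) : MvPolynomial (Fin 2) k :=
  ∑ m ∈ f.support, f.coeff m •
    ((⇑(pderiv (R := k) (0 : Fin 2)))^[m 0] ((⇑(pderiv (R := k) (1 : Fin 2)))^[m 1] F))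


/-- The binary linear form `p.1 * x + p.2 * y`. -/
noncomputable def lin (p : ℝ × ℝ) : MvPolynomial (Fin 2) ℝ :=
  C p.1 * X 0 + C p.2 * X 1

/-- For `l = a x + b y`, the form `l_⊥ = b x - a y`. -/
noncomputable def lperp (p : ℝ × ℝ) : MvPolynomial (Fin 2) ℝ :=
  C p.2 * X 0 - C p.1 * X 1

/-- A binary form `g` of degree `r` has almost real roots if it is nonzero, homogeneous of
degree `r`, and has at least `r - 2` simple, pairwise non-proportional real linear factors. -/
def HasAlmostRealRoots (r : ℕ) (g : MvPolynomial (Fin 2) ℝ) : Prop :=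
  g ≠ 0 ∧ g.IsHomogeneous r ∧
  ∃ l : Fin (r - 2) → ℝ × ℝ, (∀ i, l i ≠ 0) ∧
    (∀ i j, i ≠ j → (l i).1 * (l j).2 ≠ (l i).2 * (l j).1) ∧
    (∏ i, lin (l i)) ∣ g ∧ (∀ i, ¬ (lin (l i)) ^ 2 ∣ g)

/-- The almost real rank: least `r` such that `(F)^⊥` contains a degree-`r` form
with almost real roots. -/
noncomputable def arrank (F : MvPolynomial (Fin 2) ℝ) : ℕ :=
  sInf {r | ∃ g, HasAlmostRealRoots r g ∧ diffOp g F = 0}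

/-- The minimal degree of a nonzero (homogeneous) element of the apolar ideal `(F)^⊥`;
this equals the complex Waring border rank of `F`. -/
noncomputable def minApolarDeg (F : MvPolynomial (Fin 2) ℝ) : ℕ :=
  sInf {r | ∃ g, g ≠ 0 ∧ MvPolynomial.IsHomogeneous g r ∧ diffOp g F = 0}



open Finset

noncomputable def P2 (i j : ℕ) : Fin 2 →₀ ℕ := Finsupp.single 0 i + Finsupp.single 1 j

lemma P2_apply0 (i j : ℕ) : P2 i j 0 = i := by simp [P2, Finsupp.single_apply]
lemma P2_apply1 (i j : ℕ) : P2 i j 1 = j := by simp [P2, Finsupp.single_apply]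

lemma eq_P2 (m : Fin 2 →₀ ℕ) : m = P2 (m 0) (m 1) := by
  ext i
  fin_cases i
  · simp [P2_apply0]
  · simp [P2_apply1]

lemma P2_inj {i j i' j' : ℕ} (h : P2 i j = P2 i' j') : i = i' ∧ j = j' := by
  constructor
  · have := congrArg (fun f => f 0) h; simpa [P2_apply0] using this
  · have := congrArg (fun f => f 1) h; simpa [P2_apply1] using this

lemma Xpow_mul (i j : ℕ) : (X 0 : MvPolynomial (Fin 2) ℝ) ^ i * X 1 ^ j = monomial (P2 i j) 1 := by
  rw [X_pow_eq_monomial, X_pow_eq_monomial, monomial_mul, one_mul, P2]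

lemma degree_two (m : Fin 2 →₀ ℕ) : m.degree = m 0 + m 1 := by
  rw [Finsupp.degree_apply]
  rw [Finset.sum_subset (Finset.subset_univ m.support)]
  · exact Fin.sum_univ_two m
  · intro x _ hx
    simpa using Finsupp.notMem_support_iff.mp hx

lemma iter_pd1 (a b k : ℕ) :
    (⇑(pderiv (R := ℝ) (1 : Fin 2)))^[k] (X 0 ^ a * X 1 ^ b)
      = C ((b.descFactorial k : ℕ) : ℝ) * (X 0 ^ a * X 1 ^ (b - k)) := by
  induction k with
  | zero => simp
  | succ k ih =>
    rw [Function.iterate_succ_apply', ih, pderiv_C_mul, pderiv_mul, pderiv_pow,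
      pderiv_X_of_ne (by decide), pderiv_pow, pderiv_X_self]
    have h1 : b.descFactorial (k + 1) = (b - k) * b.descFactorial k :=
      Nat.descFactorial_succ b k
    have h2 : b - k - 1 = b - (k + 1) := by omega
    rcases Nat.lt_or_ge b k with hbk | hbk
    · have : b.descFactorial k = 0 := Nat.descFactorial_eq_zero_iff_lt.mpr hbk
      simp [this, Nat.descFactorial_eq_zero_iff_lt.mpr (by omega : b < k + 1)]
    · rw [h1, h2, Nat.cast_mul, C_mul, ← map_natCast (C : ℝ →+* MvPolynomial (Fin 2) ℝ) (b - k)]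
      ring

lemma iter_pd0 (r : ℝ) (a b k : ℕ) :
    (⇑(pderiv (R := ℝ) (0 : Fin 2)))^[k] (C r * (X 0 ^ a * X 1 ^ b))
      = C (r * ((a.descFactorial k : ℕ) : ℝ)) * (X 0 ^ (a - k) * X 1 ^ b) := by
  induction k with
  | zero => simp
  | succ k ih =>
    rw [Function.iterate_succ_apply', ih, pderiv_C_mul, pderiv_mul, pderiv_pow,
      pderiv_X_self, pderiv_pow, pderiv_X_of_ne (by decide)]
    have h1 : a.descFactorial (k + 1) = (a - k) * a.descFactorial k :=
      Nat.descFactorial_succ a k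
    have h2 : a - k - 1 = a - (k + 1) := by omega
    rcases Nat.lt_or_ge a k with hak | hak
    · have : a.descFactorial k = 0 := Nat.descFactorial_eq_zero_iff_lt.mpr hak
      simp [this, Nat.descFactorial_eq_zero_iff_lt.mpr (by omega : a < k + 1)]
    · have h3 : (C (r * ((a.descFactorial (k+1) : ℕ) : ℝ)) : MvPolynomial (Fin 2) ℝ)
          = C r * C ((a.descFactorial k : ℕ) : ℝ) * C (((a - k : ℕ) : ℝ)) := by
        rw [h1]; push_cast; rw [map_mul, map_mul]; ring
      rw [h2, h3, ← map_natCast (C : ℝ →+* MvPolynomial (Fin 2) ℝ) (a - k), map_mul]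
      ring

lemma D_eq (i j a b : ℕ) :
    (⇑(pderiv (R := ℝ) (0 : Fin 2)))^[i] ((⇑(pderiv (R := ℝ) (1 : Fin 2)))^[j]
      ((X 0 : MvPolynomial (Fin 2) ℝ) ^ a * X 1 ^ b))
    = C (((a.descFactorial i * b.descFactorial j : ℕ) : ℝ)) * (X 0 ^ (a - i) * X 1 ^ (b - j)) := by
  rw [iter_pd1, iter_pd0]
  push_cast
  ring_nf

lemma apolar_iff {d : ℕ} (hd : 5 ≤ d) (g : MvPolynomial (Fin 2) ℝ) :
    diffOp g ((X 0 : MvPolynomial (Fin 2) ℝ) ^ (d - 2) * X 1 ^ 2) = 0 ↔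
      ∀ i j : ℕ, i ≤ d - 2 → j ≤ 2 → coeff (P2 i j) g = 0 := by
  constructor
  · intro h i j hi hj
    by_cases hmem : P2 i j ∈ g.support
    swap
    · exact notMem_support_iff.mp hmem
    have hc := congrArg (coeff (P2 (d - 2 - i) (2 - j))) h
    rw [diffOp, coeff_zero, MvPolynomial.coeff_sum] at hc
    rw [Finset.sum_eq_single_of_mem (P2 i j) hmem (fun m hm hne => ?side)] at hc
    case side =>
      rw [coeff_smul, D_eq, Xpow_mul, coeff_C_mul, coeff_monomial]
      rcases Nat.lt_or_ge (d - 2) (m 0) with h0 | h0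
      · rw [Nat.descFactorial_eq_zero_iff_lt.mpr h0]; simp
      rcases Nat.lt_or_ge 2 (m 1) with h1 | h1
      · rw [Nat.descFactorial_eq_zero_iff_lt.mpr h1]; simp
      rw [if_neg, mul_zero, smul_zero]
      intro heq
      obtain ⟨e0, e1⟩ := P2_inj heq
      have hm0 : m 0 = i := by omega
      have hm1 : m 1 = j := by omega
      exact hne (by rw [eq_P2 m, hm0, hm1])
    rw [coeff_smul, P2_apply0, P2_apply1, D_eq, Xpow_mul, coeff_C_mul, coeff_monomial,
      if_pos rfl, mul_one, smul_eq_mul] at hc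
    have hK : (((d - 2).descFactorial i * Nat.descFactorial 2 j : ℕ) : ℝ) ≠ 0 := by
      rw [Nat.cast_ne_zero, Nat.mul_ne_zero_iff]
      simp only [ne_eq, Nat.descFactorial_eq_zero_iff_lt]
      omega
    exact (mul_eq_zero.mp hc).resolve_right hK
  · intro h
    rw [diffOp]
    apply Finset.sum_eq_zero
    intro m hm
    rw [D_eq]
    rcases Nat.lt_or_ge (d - 2) (m 0) with h0 | h0
    · rw [Nat.descFactorial_eq_zero_iff_lt.mpr h0]
      simp
    rcases Nat.lt_or_ge 2 (m 1) with h1 | h1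
    · rw [Nat.descFactorial_eq_zero_iff_lt.mpr h1]
      simp
    exfalso
    exact mem_support_iff.mp hm (by rw [eq_P2 m]; exact h _ _ h0 h1)

noncomputable def phi : MvPolynomial (Fin 2) ℝ →ₐ[ℝ] Polynomial ℝ :=
  aeval ![Polynomial.X, 1]

lemma hdeg_of_hom {g : MvPolynomial (Fin 2) ℝ} {r : ℕ} (hg : g.IsHomogeneous r)
    {m : Fin 2 →₀ ℕ} (hm : m ∈ g.support) : m 0 + m 1 = r := by
  have h := hg (mem_support_iff.mp hm)
  rw [show (Finsupp.weight 1 : (Fin 2 →₀ ℕ) →+ ℕ) = Finsupp.weight (fun _ => 1) from rfl,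
    ← Finsupp.degree_eq_weight_one] at h
  rw [← degree_two]
  exact h

lemma phi_apply (g : MvPolynomial (Fin 2) ℝ) :
    phi g = ∑ m ∈ g.support, Polynomial.C (coeff m g) * Polynomial.X ^ (m 0) := by
  conv_lhs => rw [g.as_sum]
  rw [map_sum]
  refine Finset.sum_congr rfl fun m _ => ?_
  rw [phi, aeval_monomial]
  rw [Finsupp.prod_fintype _ _ (fun i => pow_zero _)]
  rw [Fin.prod_univ_two]
  simp [Polynomial.algebraMap_eq]

lemma phi_coeff {g : MvPolynomial (Fin 2) ℝ} {r : ℕ} (hg : g.IsHomogeneous r) (k : ℕ) :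
    (phi g).coeff k = if k ≤ r then coeff (P2 k (r - k)) g else 0 := by
  rw [phi_apply, Polynomial.finset_sum_coeff]
  simp only [Polynomial.coeff_C_mul, Polynomial.coeff_X_pow]
  split_ifs with hk
  · by_cases hmem : P2 k (r - k) ∈ g.support
    · rw [Finset.sum_eq_single_of_mem _ hmem (fun m hm hne => ?_)]
      · rw [P2_apply0, if_pos rfl, mul_one]
      · rw [if_neg, mul_zero]
        intro he
        have h2 := hdeg_of_hom hg hm
        apply hne
        rw [eq_P2 m, ← he]
        congr 1
        omega
    · rw [notMem_support_iff.mp hmem]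
      apply Finset.sum_eq_zero
      intro m hm
      rw [if_neg, mul_zero]
      intro he
      apply hmem
      have h2 := hdeg_of_hom hg hm
      have : P2 k (r - k) = m := by rw [eq_P2 m, ← he]; congr 1; omega
      rwa [this]
  · apply Finset.sum_eq_zero
    intro m hm
    have h2 := hdeg_of_hom hg hm
    rw [if_neg (by omega), mul_zero]

lemma phi_ne_zero {g : MvPolynomial (Fin 2) ℝ} {r : ℕ} (hg : g.IsHomogeneous r) (h0 : g ≠ 0) :
    phi g ≠ 0 := by
  obtain ⟨m, hm⟩ := exists_coeff_ne_zero h0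
  have hms : m ∈ g.support := mem_support_iff.mpr hm
  have h2 := hdeg_of_hom hg hms
  intro hz
  have := phi_coeff hg (m 0)
  rw [hz, Polynomial.coeff_zero, if_pos (by omega)] at this
  apply hm
  have hmeq : P2 (m 0) (r - m 0) = m := by
    have h3 : r - m 0 = m 1 := by omega
    rw [h3, ← eq_P2]
  rw [hmeq] at this
  exact this.symm

lemma coeff_mul_X_sub_C' (P : Polynomial ℝ) (t : ℝ) (k : ℕ) (hk : 1 ≤ k) :
    (P * (Polynomial.X - Polynomial.C t)).coeff k = P.coeff (k - 1) - t * P.coeff k := by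
  rw [mul_sub, Polynomial.coeff_sub, Polynomial.coeff_mul_C]
  have hx : (P * Polynomial.X).coeff (k - 1 + 1) = P.coeff (k - 1) := Polynomial.coeff_mul_X _ _
  rw [show k - 1 + 1 = k from by omega] at hx
  rw [hx]; ring

lemma prod_monic (a : ℕ → ℝ) (n : ℕ) :
    (∏ i ∈ Finset.range n, (Polynomial.X - Polynomial.C (a i))).Monic :=
  Polynomial.monic_prod_of_monic _ _ (fun i _ => Polynomial.monic_X_sub_C _)

lemma prod_natDegree (a : ℕ → ℝ) (n : ℕ) :
    (∏ i ∈ Finset.range n, (Polynomial.X - Polynomial.C (a i))).natDegree = n := by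
  rw [Polynomial.natDegree_prod _ _ (fun i _ => Polynomial.X_sub_C_ne_zero _)]
  simp

lemma prod_coeff_sub (a : ℕ → ℝ) : ∀ n, 2 ≤ n →
    (∏ i ∈ Finset.range n, (Polynomial.X - Polynomial.C (a i))).coeff (n - 1) = -(∑ i ∈ Finset.range n, a i) ∧
    (∏ i ∈ Finset.range n, (Polynomial.X - Polynomial.C (a i))).coeff (n - 2)
      = ((∑ i ∈ Finset.range n, a i) ^ 2 - ∑ i ∈ Finset.range n, (a i) ^ 2) / 2 := by
  intro n
  induction n with
  | zero => omega
  | succ n ih =>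
    intro hn
    rcases Nat.lt_or_ge n 2 with h2 | h2
    · have hn1 : n = 1 := by omega
      subst hn1
      have hexp : (∏ i ∈ Finset.range 2, (Polynomial.X - Polynomial.C (a i)))
          = Polynomial.X ^ 2 - Polynomial.C (a 0 + a 1) * Polynomial.X + Polynomial.C (a 0 * a 1) := by
        rw [Finset.prod_range_succ, Finset.prod_range_one, map_add, map_mul]
        ring
      rw [hexp]
      constructor
      · simp [Finset.sum_range_succ, Polynomial.coeff_add, Polynomial.coeff_sub,
          Polynomial.coeff_X_pow, Polynomial.coeff_C]
      · simp only [Nat.sub_self, Polynomial.coeff_add, Polynomial.coeff_sub,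
          Polynomial.coeff_X_pow, Polynomial.coeff_C_mul, Polynomial.coeff_X_zero, Polynomial.coeff_C,
          Finset.sum_range_succ, Finset.sum_range_one]
        norm_num
        ring
    · obtain ⟨h1, h0⟩ := ih h2
      have hM := prod_monic a n
      have hD := prod_natDegree a n
      have hlead : (∏ i ∈ Finset.range n, (Polynomial.X - Polynomial.C (a i))).coeff n = 1 := by
        have := hM.coeff_natDegree
        rwa [hD] at this
      rw [Finset.prod_range_succ]
      constructor
      · rw [show n + 1 - 1 = n from rfl,
          coeff_mul_X_sub_C' _ _ _ (by omega), h1, hlead, Finset.sum_range_succ]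
        ring
      · rw [show n + 1 - 2 = n - 1 from by omega,
          coeff_mul_X_sub_C' _ _ _ (by omega),
          show n - 1 - 1 = n - 2 from by omega, h0, h1,
          Finset.sum_range_succ, Finset.sum_range_succ]
        ring

lemma lower_bound {d r : ℕ} (hd : 5 ≤ d) (g : MvPolynomial (Fin 2) ℝ)
    (h : HasAlmostRealRoots r g)
    (hap : diffOp g ((X 0 : MvPolynomial (Fin 2) ℝ) ^ (d - 2) * X 1 ^ 2) = 0) :
    d - 1 ≤ r := by
  by_contra hlt
  push_neg at hlt
  obtain ⟨hg0, hhom, l, hl0, hlp, hdvd, hsq⟩ := h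
  have hco := (apolar_iff hd g).mp hap
  rcases Nat.lt_or_ge r 3 with hr3 | hr3
  · apply hg0
    ext m
    rw [coeff_zero]
    by_contra hc
    have hdg := hdeg_of_hom hhom (mem_support_iff.mpr hc)
    have h2 := hco (m 0) (m 1) (by omega) (by omega)
    rw [← eq_P2] at h2
    exact hc h2
  have hsup : ∀ m ∈ g.support, 3 ≤ m 1 := by
    intro m hm
    by_contra hmlt
    have hdg := hdeg_of_hom hhom hm
    have h2 := hco (m 0) (m 1) (by omega) (by omega)
    rw [← eq_P2] at h2
    exact mem_support_iff.mp hm h2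
  have hy2 : (X 1 : MvPolynomial (Fin 2) ℝ) ^ 2 ∣ g := by
    conv_rhs => rw [g.as_sum]
    apply Finset.dvd_sum
    intro m hm
    rw [X_pow_eq_monomial]
    exact monomial_dvd_monomial.mpr
      ⟨Or.inr (Finsupp.single_le_iff.mpr (by have := hsup m hm; omega)), one_dvd _⟩
  have hl1 : ∀ i, (l i).1 ≠ 0 := by
    intro i hzero
    apply hsq i
    have hlin : lin (l i) = C (l i).2 * X 1 := by rw [lin, hzero]; simp
    have ht : (l i).2 ≠ 0 := by
      intro h2
      exact hl0 i (Prod.ext hzero h2)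
    obtain ⟨w, hw⟩ := hy2
    refine ⟨C ((l i).2 ^ 2)⁻¹ * w, ?_⟩
    rw [hlin, mul_pow, ← C_pow, hw]
    rw [show C ((l i).2 ^ 2) * X 1 ^ 2 * (C ((l i).2 ^ 2)⁻¹ * w)
        = (C ((l i).2 ^ 2) * C ((l i).2 ^ 2)⁻¹) * (X 1 ^ 2 * w) from by ring]
    rw [← C_mul, mul_inv_cancel₀ (pow_ne_zero 2 ht), C_1, one_mul]
  have hQdvd : phi (∏ i, lin (l i)) ∣ phi g := map_dvd phi hdvd
  have hdegg : (phi g).natDegree ≤ r - 3 := by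
    rw [Polynomial.natDegree_le_iff_coeff_eq_zero]
    intro N hN
    rw [phi_coeff hhom]
    split_ifs with hNr
    · exact hco N (r - N) (by omega) (by omega)
    · rfl
  have hP : phi (∏ i, lin (l i))
      = ∏ i, (Polynomial.C (l i).1 * Polynomial.X + Polynomial.C (l i).2) := by
    rw [map_prod]
    refine Finset.prod_congr rfl fun i _ => ?_
    rw [lin, phi]
    simp [Polynomial.algebraMap_eq]
  have hfac_ne : ∀ i : Fin (r - 2),
      (Polynomial.C (l i).1 * Polynomial.X + Polynomial.C (l i).2) ≠ 0 := by
    intro i hz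
    apply hl1 i
    have := congrArg (Polynomial.coeff · 1) hz
    simpa using this
  have hdegP : (phi (∏ i, lin (l i))).natDegree = r - 2 := by
    rw [hP, Polynomial.natDegree_prod _ _ (fun i _ => hfac_ne i)]
    rw [Finset.sum_congr rfl (fun i _ => Polynomial.natDegree_linear (hl1 i))]
    simp
  have hle := Polynomial.natDegree_le_of_dvd hQdvd (phi_ne_zero hhom hg0)
  omega

lemma upper_bound {d : ℕ} (hd : 5 ≤ d) :
    ∃ g, HasAlmostRealRoots (d - 1) g ∧
      diffOp g ((X 0 : MvPolynomial (Fin 2) ℝ) ^ (d - 2) * X 1 ^ 2) = 0 := by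
  set n := d - 1 - 2 with hn_def
  have hn : 2 ≤ n := by omega
  set a : ℕ → ℝ := fun i => (i : ℝ) - ((n : ℝ) - 1) / 2 with ha_def
  have hainj : ∀ i j : ℕ, a i = a j → i = j := by
    intro i j hij
    have h1 : (i : ℝ) = j := by
      simp only [ha_def] at hij
      linarith
    exact_mod_cast h1
  have hgauss : (∑ i ∈ Finset.range n, (i : ℝ)) = (n : ℝ) * ((n : ℝ) - 1) / 2 := by
    have h := Finset.sum_range_id_mul_two n
    have h2 := congrArg (Nat.cast : ℕ → ℝ) h
    push_cast [Nat.cast_sub (by omega : 1 ≤ n)] at h2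
    linarith
  have hS1 : (∑ i ∈ Finset.range n, a i) = 0 := by
    simp only [ha_def]
    rw [Finset.sum_sub_distrib, Finset.sum_const, Finset.card_range, hgauss, nsmul_eq_mul]
    ring
  set c : ℝ := (∑ i ∈ Finset.range n, (a i) ^ 2) / 2 with hc_def
  have hS2 : (∑ i ∈ Finset.range n, (a i) ^ 2) = 2 * c := by rw [hc_def]; ring
  have hc : 0 < c := by
    rw [hc_def]
    have hterm : ∃ i ∈ Finset.range n, 0 < (a i) ^ 2 := by
      by_cases h0 : a 0 = 0
      · refine ⟨1, Finset.mem_range.mpr (by omega), ?_⟩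
        have : a 1 ≠ 0 := by
          intro h1
          have := hainj 0 1 (by rw [h0, h1])
          omega
        positivity
      · exact ⟨0, Finset.mem_range.mpr (by omega), by positivity⟩
    obtain ⟨i0, hi0, hpos⟩ := hterm
    have hsum : 0 < ∑ i ∈ Finset.range n, (a i) ^ 2 :=
      Finset.sum_pos' (fun i _ => sq_nonneg _) ⟨i0, hi0, hpos⟩
    linarith
  set q : MvPolynomial (Fin 2) ℝ := X 0 ^ 2 + C c * X 1 ^ 2 with hq_def
  set pm : MvPolynomial (Fin 2) ℝ := ∏ i ∈ Finset.range n, (X 0 - C (a i) * X 1) with hpm_def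
  set g : MvPolynomial (Fin 2) ℝ := q * pm with hg_def
  set P : Polynomial ℝ := ∏ i ∈ Finset.range n, (Polynomial.X - Polynomial.C (a i)) with hP_def
  have hphig : phi g = (Polynomial.X ^ 2 + Polynomial.C c) * P := by
    rw [hg_def, map_mul, hq_def, hpm_def, map_add, map_mul, map_pow, map_pow, map_prod, hP_def]
    simp [phi, Polynomial.algebraMap_eq]
  -- nonzero
  have hg0 : g ≠ 0 := by
    intro hz
    have he := congrArg (MvPolynomial.eval ![(1 : ℝ), 0]) hz
    rw [hg_def, hq_def, hpm_def] at he
    simp [Finset.prod_congr] at he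
  -- homogeneous
  have hqh : q.IsHomogeneous 2 := by
    rw [hq_def]
    apply IsHomogeneous.add
    · simpa using (isHomogeneous_X ℝ (0 : Fin 2)).pow 2
    · simpa using (isHomogeneous_C (Fin 2) c).mul ((isHomogeneous_X ℝ (1 : Fin 2)).pow 2)
  have hpmh : pm.IsHomogeneous n := by
    rw [hpm_def]
    have h1 : ∀ i : ℕ, ((X 0 : MvPolynomial (Fin 2) ℝ) - C (a i) * X 1).IsHomogeneous 1 := by
      intro i
      exact (isHomogeneous_X ℝ (0 : Fin 2)).sub
        (by simpa using (isHomogeneous_C (Fin 2) (a i)).mul (isHomogeneous_X ℝ (1 : Fin 2)))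
    have := IsHomogeneous.prod (Finset.range n)
      (fun i => (X 0 : MvPolynomial (Fin 2) ℝ) - C (a i) * X 1) (fun _ => 1) (fun i _ => h1 i)
    simpa using this
  have hghom : g.IsHomogeneous (d - 1) := by
    have := hqh.mul hpmh
    rwa [show 2 + n = d - 1 from by omega] at this
  -- coefficients of P
  have hMon := prod_monic a n
  have hDeg := prod_natDegree a n
  rw [← hP_def] at hMon hDeg
  obtain ⟨hP1, hP2⟩ := prod_coeff_sub a n hn
  rw [← hP_def] at hP1 hP2
  rw [hS1] at hP1
  rw [hS1, hS2] at hP2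
  norm_num at hP1
  have hP2' : P.coeff (n - 2) = -c := by rw [hP2]; ring
  have hlead : P.coeff n = 1 := by
    have := hMon.coeff_natDegree
    rwa [hDeg] at this
  have hPhi1 : (phi g).coeff (n + 1) = 0 := by
    rw [hphig, show Polynomial.X ^ 2 + Polynomial.C c = Polynomial.C c + Polynomial.X ^ 2 from by
      ring, add_mul, Polynomial.coeff_add, mul_comm (Polynomial.X ^ 2) P]
    have hx : (P * Polynomial.X ^ 2).coeff ((n - 1) + 2) = P.coeff (n - 1) :=
      Polynomial.coeff_mul_X_pow _ _ _
    rw [show (n - 1) + 2 = n + 1 from by omega] at hx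
    rw [hx, hP1, Polynomial.coeff_C_mul,
      Polynomial.coeff_eq_zero_of_natDegree_lt (by omega : P.natDegree < n + 1)]
    ring
  have hPhi2 : (phi g).coeff n = 0 := by
    rw [hphig, show Polynomial.X ^ 2 + Polynomial.C c = Polynomial.C c + Polynomial.X ^ 2 from by
      ring, add_mul, Polynomial.coeff_add, mul_comm (Polynomial.X ^ 2) P]
    have hx : (P * Polynomial.X ^ 2).coeff ((n - 2) + 2) = P.coeff (n - 2) :=
      Polynomial.coeff_mul_X_pow _ _ _
    rw [show (n - 2) + 2 = n from by omega] at hx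
    rw [hx, hP2', Polynomial.coeff_C_mul, hlead]
    ring
  -- the linear forms
  have hlin : ∀ k : ℕ, lin ((1 : ℝ), -(a k)) = X 0 - C (a k) * X 1 := by
    intro k
    rw [lin, map_neg, map_one, one_mul]
    ring
  have hprodlin : (∏ i : Fin (d - 1 - 2), lin ((1 : ℝ), -(a ↑i))) = pm := by
    rw [hpm_def, ← Fin.prod_univ_eq_prod_range (fun k => X 0 - C (a k) * X 1) n]
    exact Finset.prod_congr rfl fun i _ => hlin ↑i
  refine ⟨g, ⟨hg0, hghom, fun i => ((1 : ℝ), -(a ↑i)), ?_, ?_, ?_, ?_⟩, ?_⟩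
  · intro i h
    simpa using congrArg Prod.fst h
  · intro i j hij heq
    simp only [one_mul, mul_one, neg_inj] at heq
    exact hij (Fin.ext (hainj _ _ heq).symm)
  · rw [hprodlin]
    exact Dvd.intro_left q rfl
  · -- squares do not divide
    intro i hdvd
    have hmap := map_dvd phi hdvd
    have hlphi : phi (lin ((1 : ℝ), -(a ↑i))) = Polynomial.X - Polynomial.C (a ↑i) := by
      rw [hlin, map_sub, map_mul, phi]
      simp [Polynomial.algebraMap_eq]
    rw [map_pow, hlphi, hphig] at hmap
    have hmem : (i : ℕ) ∈ Finset.range n := Finset.mem_range.mpr i.isLt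
    have hsplit : (Polynomial.X ^ 2 + Polynomial.C c) * P
        = (Polynomial.X - Polynomial.C (a ↑i)) *
          ((Polynomial.X ^ 2 + Polynomial.C c) *
            ∏ j ∈ (Finset.range n).erase ↑i, (Polynomial.X - Polynomial.C (a j))) := by
      rw [hP_def, ← Finset.mul_prod_erase _ _ hmem]
      ring
    rw [hsplit, pow_two] at hmap
    have hdvd2 : (Polynomial.X - Polynomial.C (a ↑i)) ∣
        ((Polynomial.X ^ 2 + Polynomial.C c) *
          ∏ j ∈ (Finset.range n).erase ↑i, (Polynomial.X - Polynomial.C (a j))) :=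
      (mul_dvd_mul_iff_left (Polynomial.X_sub_C_ne_zero (a ↑i))).mp hmap
    have hroot := Polynomial.dvd_iff_isRoot.mp hdvd2
    rw [Polynomial.IsRoot] at hroot
    simp only [Polynomial.eval_mul, Polynomial.eval_add, Polynomial.eval_pow,
      Polynomial.eval_X, Polynomial.eval_C, Polynomial.eval_prod, Polynomial.eval_sub] at hroot
    rcases mul_eq_zero.mp hroot with h1 | h2
    · have : (0 : ℝ) < (a ↑i) ^ 2 + c := add_pos_of_nonneg_of_pos (sq_nonneg _) hc
      linarith
    · have : ∀ j ∈ (Finset.range n).erase ↑i, a ↑i - a j ≠ 0 := by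
        intro j hj
        rw [sub_ne_zero]
        intro he
        exact Finset.ne_of_mem_erase hj (hainj _ _ he.symm)
      exact Finset.prod_ne_zero_iff.mpr this h2
  · -- apolarity
    apply (apolar_iff hd g).mpr
    intro i j hi hj
    by_cases hij : i + j = d - 1
    · have hcoef := phi_coeff hghom i
      rw [if_pos (by omega : i ≤ d - 1)] at hcoef
      rw [show d - 1 - i = j from by omega] at hcoef
      rw [← hcoef]
      have : i = n + 1 ∨ i = n := by omega
      rcases this with h | h
      · rw [h]; exact hPhi1
      · rw [h]; exact hPhi2
    · apply hghom.coeff_eq_zero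
      rw [degree_two, P2_apply0, P2_apply1]
      exact hij


theorem stmt_15 {d : ℕ} (hd : 5 ≤ d) :
    arrank (X 0 ^ (d - 2) * X 1 ^ 2) = d - 1 := by
  obtain ⟨g, hg, hap⟩ := upper_bound hd
  have hmem : d - 1 ∈ {r | ∃ g, HasAlmostRealRoots r g ∧
      diffOp g ((X 0 : MvPolynomial (Fin 2) ℝ) ^ (d - 2) * X 1 ^ 2) = 0} := ⟨g, hg, hap⟩
  rw [arrank]
  refine le_antisymm (Nat.sInf_le hmem) ?_
  have hin := Nat.sInf_mem (⟨d - 1, hmem⟩ : Set.Nonempty _)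
  obtain ⟨g', hg', hap'⟩ := hin
  exact lower_bound hd g' hg' hap'
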